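/- Every conformal metric on ℂ∖{0} of the form g = 4α²λ²|a−1|²|z|^{2(α−1)}/(|z^α+a|²+λ²|z^α+1|²)² |dz|² with α ≥ 1 an integer, λ > 0, a ∈ ℂ∖{0,1}, equals, after a linear change of coordinate z = p w with suitable p ∈ ℂ∖{0}, the metric 4α²|w|^{2(α−1)}/(1+|w^α+b|²)² |dw|² for some b ∈ ℝ. -/

import Mathlib

open Complex

/-- the metric `4α²λ²|a−1|²|z|^{2(α−1)}/(|z^α+a|²+λ²|z^α+1|²)² |dz|²`
becomes, under a suitable linear coordinate change `z = p w`,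
`4α²|w|^{2(α−1)}/(1+|w^α+b|²)² |dw|²` with `b ∈ ℝ`. -/
theorem stmt14 (α : ℕ) (hα : 1 ≤ α) (lam : ℝ) (hlam : 0 < lam)
    (a : ℂ) (ha0 : a ≠ 0) (ha1 : a ≠ 1) :
    let ρ : ℂ → ℝ := fun z =>
      4 * (α : ℝ) ^ 2 * lam ^ 2 * ‖a - 1‖ ^ 2 *
        ‖z‖ ^ (2 * (α - 1 : ℤ)) /
        (‖z ^ α + a‖ ^ 2 + lam ^ 2 * ‖z ^ α + 1‖ ^ 2) ^ 2
    ∃ p : ℂ, p ≠ 0 ∧ ∃ b : ℝ,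
      ∀ w : ℂ, w ≠ 0 →
        ρ (p * w) * ‖p‖ ^ 2
          = 4 * (α : ℝ) ^ 2 * ‖w‖ ^ (2 * (α - 1 : ℤ)) /
              (1 + ‖w ^ α + (b : ℂ)‖ ^ 2) ^ 2 := by
  intro ρ
  have hA0 : 0 < ‖a - 1‖ := by
    simpa using norm_pos_iff.mpr (sub_ne_zero.mpr ha1)
  set A := ‖a - 1‖ with hAdef
  set c0 : ℝ := lam * A / (1 + lam ^ 2) with hc0def
  have hc0 : 0 < c0 := by positivity
  set u : ℂ := a + ((lam ^ 2 : ℝ) : ℂ) with hudef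
  set v : ℂ := if u = 0 then 1 else u / ((‖u‖ : ℝ) : ℂ) with hvdef
  have hnv : Complex.normSq v = 1 := by
    rw [hvdef]
    split_ifs with h
    · simp
    · rw [Complex.normSq_div, Complex.normSq_ofReal, ← sq, Complex.sq_norm,
        div_self (by simpa [Complex.normSq_eq_zero] using h)]
  set q : ℂ := (c0 : ℂ) * v with hqdef
  have hnq : Complex.normSq q = c0 ^ 2 := by
    rw [hqdef, Complex.normSq_mul, hnv, Complex.normSq_ofReal]; ring
  have hq0 : q ≠ 0 := by
    intro h
    have : Complex.normSq q = 0 := by simp [h]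
    rw [hnq] at this
    nlinarith
  have hqu : q * (starRingEnd ℂ) u = ((c0 * ‖u‖ : ℝ) : ℂ) := by
    rw [hqdef, hvdef]
    split_ifs with h
    · simp [h]
    · have habs : ((‖u‖ : ℝ) : ℂ) ≠ 0 := by
        simpa using (norm_ne_zero_iff.mpr h)
      field_simp
      rw [mul_assoc, Complex.mul_conj]
      norm_cast
      rw [Complex.normSq_eq_norm_sq u]
      ring
  set b : ℝ := ‖u‖ / (lam * A) with hbdef
  have hid : lam ^ 2 * Complex.normSq (a - 1) + Complex.normSq u =
      (1 + lam ^ 2) * (Complex.normSq a + lam ^ 2) := by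
    simp only [hudef, Complex.normSq_apply, Complex.add_re, Complex.add_im,
      Complex.sub_re, Complex.sub_im, Complex.ofReal_re, Complex.ofReal_im,
      Complex.one_re, Complex.one_im]
    ring
  set C : ℝ := (1 + lam ^ 2) * c0 ^ 2 with hCdef
  have hC : 0 < C := by positivity
  have hCb : C * b = c0 * ‖u‖ := by
    rw [hCdef, hbdef, hc0def]
    field_simp
  have hA2 : A ^ 2 = Complex.normSq (a - 1) := Complex.sq_norm _
  have hU2 : ‖u‖ ^ 2 = Complex.normSq u := Complex.sq_norm _
  have hCb2 : C * (1 + b ^ 2) = Complex.normSq a + lam ^ 2 := by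
    have hid' : lam ^ 2 * A ^ 2 + ‖u‖ ^ 2
        = (1 + lam ^ 2) * (Complex.normSq a + lam ^ 2) := by
      rw [hA2, hU2]; exact hid
    rw [hCdef, hbdef, hc0def]
    field_simp
    linear_combination hid'
  have hcu : (starRingEnd ℂ) u = (starRingEnd ℂ) a + ((lam ^ 2 : ℝ) : ℂ) := by
    simp [hudef]
  have key : ∀ s : ℂ,
      Complex.normSq (q * s + a) + lam ^ 2 * Complex.normSq (q * s + 1)
        = C * (1 + Complex.normSq (s + (b : ℝ))) := by
    intro s
    have hcross : ((q * s) * (starRingEnd ℂ) a).re + lam ^ 2 * (q * s).re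
        = (c0 * ‖u‖) * s.re := by
      have hc : (q * s) * (starRingEnd ℂ) a + ((lam ^ 2 : ℝ) : ℂ) * (q * s)
          = s * ((c0 * ‖u‖ : ℝ) : ℂ) := by
        rw [← hqu, hcu]; ring
      have h3 := congrArg Complex.re hc
      rw [Complex.add_re, Complex.re_ofReal_mul, mul_comm s, Complex.re_ofReal_mul] at h3
      linarith [h3]
    rw [Complex.normSq_add, Complex.normSq_add, Complex.normSq_add]
    simp only [Complex.normSq_mul, hnq, Complex.normSq_one, Complex.normSq_ofReal,
      map_one, mul_one, Complex.conj_ofReal]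
    have hsb : (s * ((b : ℝ) : ℂ)).re = s.re * b := by
      simp [Complex.mul_re]
    rw [hsb]
    linear_combination 2 * hcross - 2 * s.re * hCb - hCb2 - Complex.normSq s * hCdef
  -- choose p with p ^ α = q
  obtain ⟨p, hp⟩ := IsAlgClosed.exists_pow_nat_eq q (lt_of_lt_of_le one_pos (by exact_mod_cast hα))
  have hp0 : p ≠ 0 := by
    intro h
    rw [h, zero_pow (by omega)] at hp
    exact hq0 hp.symm
  refine ⟨p, hp0, b, ?_⟩
  intro w hw
  simp only [ρ]
  rw [← hAdef]
  have hpw : (p * w) ^ α = q * w ^ α := by rw [mul_pow, hp]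
  rw [hpw]
  have hD : ‖q * w ^ α + a‖ ^ 2 + lam ^ 2 * ‖q * w ^ α + 1‖ ^ 2
      = C * (1 + ‖w ^ α + (b : ℝ)‖ ^ 2) := by
    rw [Complex.sq_norm, Complex.sq_norm, Complex.sq_norm]
    exact key (w ^ α)
  rw [hD]
  have hpne : ‖p‖ ≠ 0 := norm_ne_zero_iff.mpr hp0
  rw [norm_mul p w, mul_zpow]
  have h1 : ‖p‖ ^ (2 * ((α : ℤ) - 1)) * ‖p‖ ^ 2
      = ‖p‖ ^ (2 * (α : ℤ)) := by
    rw [← zpow_natCast (‖p‖) 2, ← zpow_add₀ hpne]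
    ring_nf
  have h2 : ‖p‖ ^ (2 * (α : ℤ)) = c0 ^ 2 := by
    have h3 : ‖p‖ ^ (2 * (α : ℤ)) = (‖p‖ ^ α) ^ 2 := by
      rw [← zpow_natCast (‖p‖) α, ← zpow_natCast _ 2, ← zpow_mul]
      ring_nf
    rw [h3, ← norm_pow, hp, Complex.sq_norm, hnq]
  have hkp : ‖p‖ ^ (2 * ((α : ℤ) - 1)) * ‖p‖ ^ 2 = c0 ^ 2 := h1.trans h2
  have hT : (0 : ℝ) < 1 + ‖w ^ α + (b : ℝ)‖ ^ 2 := by positivity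
  have hC2 : lam ^ 2 * A ^ 2 * c0 ^ 2 = C ^ 2 := by
    rw [hCdef, hc0def]
    field_simp
  set T : ℝ := 1 + ‖w ^ α + (b : ℝ)‖ ^ 2 with hTdef
  set W : ℝ := ‖w‖ ^ (2 * ((α : ℤ) - 1)) with hWdef
  field_simp
  linear_combination (W * lam ^ 2 * A ^ 2) * hkp +
    W * hC2
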